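/- Let b, c ∈ ℂ be such that neither 1 + b + 2c nor 1 + 2b + c is a non-positive integer. Then ₃F₂(2b + 2c, b, c; 1 + b + 2c, 1 + 2b + c; 1) = Γ(1+b+2c)·Γ(1+2b+c) / (Γ(1+2b+2c)·Γ(1+b)·Γ(1+c)), where a quotient of Gamma values with a denominator argument equal to a non-positive integer is interpreted as zero. (This two-parameter identity is a common specialization of Dixon's theorem and of the quadratically constrained 2-balanced Slater summation of ₃F₂(1).) -/

import Mathlib

noncomputable def poch (a : ℂ) (k : ℕ) : ℂ := Polynomial.eval a (ascPochhammer ℂ k)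

noncomputable def F32 (a b c d e : ℂ) : ℂ :=
  ∑' k : ℕ, (poch a k * poch b k * poch c k) / (poch d k * poch e k * (k.factorial : ℂ))

open Finset Filter Complex Topology

private lemma poch_succ' (x : ℂ) (n : ℕ) : poch x (n+1) = poch x n * (x + n) := by
  simp [poch, ascPochhammer_succ_eval]

private lemma poch_eq_prod (x : ℂ) (n : ℕ) : poch x n = ∏ j ∈ Finset.range n, (x + j) := by
  induction n with
  | zero => simp [poch]
  | succ n ih => rw [poch_succ', ih, Finset.prod_range_succ]

private lemma poch_succ_left' (x : ℂ) (n : ℕ) : poch x (n+1) = x * poch (1+x) n := by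
  rw [poch_eq_prod, poch_eq_prod, Finset.prod_range_succ']
  simp only [Nat.cast_zero, add_zero, Nat.cast_add, Nat.cast_one]
  rw [mul_comm]
  congr 1
  exact Finset.prod_congr rfl fun j _ => by ring

private lemma poch_ne_zero' {x : ℂ} (h : ∀ m : ℕ, x + (m:ℂ) ≠ 0) (n : ℕ) : poch x n ≠ 0 := by
  rw [poch_eq_prod]
  exact Finset.prod_ne_zero_iff.2 fun j _ => h j

/-- the summand -/
noncomputable def tt (b c : ℂ) (k : ℕ) : ℂ :=
  poch (2*b+2*c) k * poch b k * poch c k /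
    (poch (1+b+2*c) k * poch (1+2*b+c) k * (k.factorial : ℂ))

/-- closed form of partial sums -/
noncomputable def SS (b c : ℂ) (n : ℕ) : ℂ :=
  poch (1+2*b+2*c) n * poch (1+b) n * poch (1+c) n /
    (poch (1+b+2*c) n * poch (1+2*b+c) n * (n.factorial : ℂ))

set_option maxHeartbeats 1000000 in
private lemma partial_sum_eq (b c : ℂ)
    (hd' : ∀ m : ℕ, (1+b+2*c) + (m:ℂ) ≠ 0) (he' : ∀ m : ℕ, (1+2*b+c) + (m:ℂ) ≠ 0) :
    ∀ n : ℕ, ∑ k ∈ Finset.range (n+1), tt b c k = SS b c n := by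
  intro n
  induction n with
  | zero => simp [tt, SS, poch]
  | succ n ih =>
    rw [Finset.sum_range_succ, ih]
    have hPd : poch (1+b+2*c) n ≠ 0 := poch_ne_zero' hd' n
    have hPe : poch (1+2*b+c) n ≠ 0 := poch_ne_zero' he' n
    have hdn : (1+b+2*c) + (n:ℂ) ≠ 0 := hd' n
    have hen : (1+2*b+c) + (n:ℂ) ≠ 0 := he' n
    have hfac : ((n.factorial : ℂ)) ≠ 0 := Nat.cast_ne_zero.2 n.factorial_ne_zero
    have hn1 : ((n:ℂ)+1) ≠ 0 := by
      have : ((n+1 : ℕ):ℂ) ≠ 0 := Nat.cast_ne_zero.2 n.succ_ne_zero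
      simpa [Nat.cast_add] using this
    unfold tt SS
    rw [poch_succ' (1+2*b+2*c), poch_succ' (1+b), poch_succ' (1+c),
        poch_succ' (1+b+2*c), poch_succ' (1+2*b+c),
        poch_succ_left' (2*b+2*c), poch_succ_left' b, poch_succ_left' c]
    rw [show (1+(2*b+2*c):ℂ) = 1+2*b+2*c by ring]
    push_cast [Nat.factorial_succ]
    rw [div_add_div _ _ (mul_ne_zero (mul_ne_zero hPd hPe) hfac)
        (mul_ne_zero (mul_ne_zero (mul_ne_zero hPd hdn) (mul_ne_zero hPe hen)) (mul_ne_zero hn1 hfac)),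
      div_eq_div_iff
        (mul_ne_zero (mul_ne_zero (mul_ne_zero hPd hPe) hfac)
          (mul_ne_zero (mul_ne_zero (mul_ne_zero hPd hdn) (mul_ne_zero hPe hen)) (mul_ne_zero hn1 hfac)))
        (mul_ne_zero (mul_ne_zero (mul_ne_zero hPd hdn) (mul_ne_zero hPe hen)) (mul_ne_zero hn1 hfac))]
    ring

private lemma poch_one (k : ℕ) : poch 1 k = (k.factorial : ℂ) := by
  induction k with
  | zero => simp [poch]
  | succ k ih => rw [poch_succ', ih, Nat.factorial_succ]; push_cast; ring


private lemma norm_sq_add_nat (z : ℂ) (k : ℕ) :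
    ‖z + (k:ℂ)‖^2 = ((k:ℝ) + z.re)^2 + z.im^2 := by
  rw [Complex.sq_norm, Complex.normSq_apply]
  simp [Complex.add_re, Complex.add_im]
  ring

private lemma norm_add_nat_le (z : ℂ) (k : ℕ)
    (h1 : 3*z.im^2 - z.re ≤ (k:ℝ)) (h2 : -z.re ≤ (k:ℝ)) :
    ‖z + (k:ℂ)‖ ≤ (k:ℝ) + (z.re + 1/6) := by
  have hsq := norm_sq_add_nat z k
  nlinarith [norm_nonneg (z + (k:ℂ)), hsq, h1, h2]

private lemma norm_add_nat_ge (z : ℂ) (k : ℕ) : (k:ℝ) + z.re ≤ ‖z + (k:ℂ)‖ := by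
  have := Complex.re_le_norm (z + (k:ℂ))
  simpa [Complex.add_re, add_comm] using this

private lemma cubic_eventually (α β γ δ ε : ℝ) (h : α+β+γ+3/2 = δ+ε) :
    ∃ X : ℝ, ∀ x : ℝ, X ≤ x → (x+α)*(x+β)*(x+γ)*(x+3) ≤ (x+δ)*(x+ε)*(x+1)^2 := by
  set q2 : ℝ := 1 + 2*(δ+ε) + δ*ε - (α*β+α*γ+β*γ) - 3*(α+β+γ) with hq2
  set q1 : ℝ := (δ+ε) + 2*δ*ε - α*β*γ - 3*(α*β+α*γ+β*γ) with hq1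
  set q0 : ℝ := δ*ε - 3*(α*β*γ) with hq0
  refine ⟨2*(|q2|+|q1|+|q0|) + 1, fun x hx => ?_⟩
  have key : (x+δ)*(x+ε)*(x+1)^2 - (x+α)*(x+β)*(x+γ)*(x+3)
      = x^3/2 + q2*x^2 + q1*x + q0 := by
    rw [hq2, hq1, hq0]; linear_combination (-x^3) * h
  have hx1 : (1:ℝ) ≤ x := by
    have := abs_nonneg q2; have := abs_nonneg q1; have := abs_nonneg q0; linarith
  have h2' : q2*x^2 ≥ -(|q2| * x^2) := by nlinarith [neg_abs_le q2, sq_nonneg x]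
  have h1' : q1*x ≥ -(|q1| * x^2) := by nlinarith [neg_abs_le q1, le_abs_self q1, abs_nonneg q1, sq_nonneg (x-1)]
  have h0' : q0 ≥ -(|q0| * x^2) := by nlinarith [neg_abs_le q0, le_abs_self q0, abs_nonneg q0, sq_nonneg (x-1)]
  have hfin : x^3/2 + q2*x^2 + q1*x + q0 ≥ 0 := by
    nlinarith [sq_nonneg x, abs_nonneg q2, abs_nonneg q1, abs_nonneg q0]
  linarith [key, hfin]

set_option maxHeartbeats 800000 in
private lemma ratio_eq (b c : ℂ)
    (hd' : ∀ m : ℕ, (1+b+2*c) + (m:ℂ) ≠ 0) (he' : ∀ m : ℕ, (1+2*b+c) + (m:ℂ) ≠ 0) (k : ℕ) :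
    tt b c (k+1) * (((1+b+2*c)+(k:ℂ)) * ((1+2*b+c)+(k:ℂ)) * ((k:ℂ)+1)) =
      tt b c k * (((2*b+2*c)+(k:ℂ)) * ((b:ℂ)+(k:ℂ)) * ((c:ℂ)+(k:ℂ))) := by
  have hPd : poch (1+b+2*c) k ≠ 0 := poch_ne_zero' hd' k
  have hPe : poch (1+2*b+c) k ≠ 0 := poch_ne_zero' he' k
  have hdn : (1+b+2*c) + (k:ℂ) ≠ 0 := hd' k
  have hen : (1+2*b+c) + (k:ℂ) ≠ 0 := he' k
  have hfac : ((k.factorial : ℂ)) ≠ 0 := Nat.cast_ne_zero.2 k.factorial_ne_zero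
  have hk1 : ((k:ℂ)+1) ≠ 0 := by
    have : ((k+1 : ℕ):ℂ) ≠ 0 := Nat.cast_ne_zero.2 k.succ_ne_zero
    simpa [Nat.cast_add] using this
  unfold tt
  rw [poch_succ' (2*b+2*c), poch_succ' b, poch_succ' c,
      poch_succ' (1+b+2*c), poch_succ' (1+2*b+c)]
  push_cast [Nat.factorial_succ]
  rw [div_mul_eq_mul_div, div_mul_eq_mul_div, div_eq_div_iff
    (mul_ne_zero (mul_ne_zero (mul_ne_zero hPd hdn) (mul_ne_zero hPe hen)) (mul_ne_zero hk1 hfac))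
    (mul_ne_zero (mul_ne_zero hPd hPe) hfac)]
  ring

noncomputable def rr (b c : ℂ) (n : ℕ) : ℝ := ‖tt b c n‖ * (((n:ℝ)+1) * ((n:ℝ)+2))

private lemma tt_summable (b c : ℂ)
    (hd' : ∀ m : ℕ, (1+b+2*c) + (m:ℂ) ≠ 0) (he' : ∀ m : ℕ, (1+2*b+c) + (m:ℂ) ≠ 0) :
    Summable (tt b c) := by
  obtain ⟨X, hX⟩ := cubic_eventually ((2*b+2*c).re + 1/6) (b.re + 1/6) (c.re + 1/6)
      ((1+b+2*c).re) ((1+2*b+c).re)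
      (by simp [Complex.add_re, Complex.mul_re, Complex.one_re, Complex.one_im]; ring)
  obtain ⟨K0, hK0⟩ := exists_nat_ge X
  obtain ⟨K1, hK1⟩ := exists_nat_ge (3*(2*b+2*c).im^2 - (2*b+2*c).re)
  obtain ⟨K2, hK2⟩ := exists_nat_ge (3*b.im^2 - b.re)
  obtain ⟨K3, hK3⟩ := exists_nat_ge (3*c.im^2 - c.re)
  obtain ⟨K4, hK4⟩ := exists_nat_ge (-(2*b+2*c).re)
  obtain ⟨K5, hK5⟩ := exists_nat_ge (-b.re)
  obtain ⟨K6, hK6⟩ := exists_nat_ge (-c.re)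
  obtain ⟨K7, hK7⟩ := exists_nat_ge (-(1+b+2*c).re)
  obtain ⟨K8, hK8⟩ := exists_nat_ge (-(1+2*b+c).re)
  set K : ℕ := K0+K1+K2+K3+K4+K5+K6+K7+K8 with hKdef
  have hstep : ∀ k, K ≤ k → rr b c (k+1) ≤ rr b c k := by
    intro k hk
    have hcast : ∀ i : ℕ, i ≤ K → (i:ℝ) ≤ (k:ℝ) := fun i hi => Nat.cast_le.2 (hi.trans hk)
    have hXk : X ≤ (k:ℝ) := hK0.trans (hcast K0 (by omega))
    have h1a : 3*(2*b+2*c).im^2 - (2*b+2*c).re ≤ (k:ℝ) := hK1.trans (hcast K1 (by omega))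
    have h1b : 3*b.im^2 - b.re ≤ (k:ℝ) := hK2.trans (hcast K2 (by omega))
    have h1c : 3*c.im^2 - c.re ≤ (k:ℝ) := hK3.trans (hcast K3 (by omega))
    have h2a : -(2*b+2*c).re ≤ (k:ℝ) := hK4.trans (hcast K4 (by omega))
    have h2b : -b.re ≤ (k:ℝ) := hK5.trans (hcast K5 (by omega))
    have h2c : -c.re ≤ (k:ℝ) := hK6.trans (hcast K6 (by omega))
    have h2d : -(1+b+2*c).re ≤ (k:ℝ) := hK7.trans (hcast K7 (by omega))
    have h2e : -(1+2*b+c).re ≤ (k:ℝ) := hK8.trans (hcast K8 (by omega))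
    set N1 := ‖(2*b+2*c)+(k:ℂ)‖ with hN1
    set N2 := ‖(b:ℂ)+(k:ℂ)‖ with hN2
    set N3 := ‖(c:ℂ)+(k:ℂ)‖ with hN3
    set D1 := ‖(1+b+2*c)+(k:ℂ)‖ with hD1
    set D2 := ‖(1+2*b+c)+(k:ℂ)‖ with hD2
    have hb1 : N1 ≤ (k:ℝ) + ((2*b+2*c).re + 1/6) := norm_add_nat_le _ k h1a h2a
    have hb2 : N2 ≤ (k:ℝ) + (b.re + 1/6) := norm_add_nat_le _ k h1b h2b
    have hb3 : N3 ≤ (k:ℝ) + (c.re + 1/6) := norm_add_nat_le _ k h1c h2c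
    have hg1 : (k:ℝ) + (1+b+2*c).re ≤ D1 := norm_add_nat_ge _ k
    have hg2 : (k:ℝ) + (1+2*b+c).re ≤ D2 := norm_add_nat_ge _ k
    have hA0 : (0:ℝ) ≤ (k:ℝ) + ((2*b+2*c).re + 1/6) := by linarith
    have hB0 : (0:ℝ) ≤ (k:ℝ) + (b.re + 1/6) := by linarith
    have hC0 : (0:ℝ) ≤ (k:ℝ) + (c.re + 1/6) := by linarith
    have hD0 : (0:ℝ) ≤ (k:ℝ) + (1+b+2*c).re := by linarith
    have hE0 : (0:ℝ) ≤ (k:ℝ) + (1+2*b+c).re := by linarith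
    have hpoly := hX (k:ℝ) hXk
    have m1 : N1*N2 ≤ ((k:ℝ) + ((2*b+2*c).re + 1/6))*((k:ℝ) + (b.re + 1/6)) :=
      mul_le_mul hb1 hb2 (norm_nonneg _) hA0
    have m2 : N1*N2*N3 ≤ ((k:ℝ) + ((2*b+2*c).re + 1/6))*((k:ℝ) + (b.re + 1/6))*((k:ℝ) + (c.re + 1/6)) :=
      mul_le_mul m1 hb3 (norm_nonneg _) (mul_nonneg hA0 hB0)
    have m3 : N1*N2*N3*((k:ℝ)+3)
        ≤ ((k:ℝ) + ((2*b+2*c).re + 1/6))*((k:ℝ) + (b.re + 1/6))*((k:ℝ) + (c.re + 1/6))*((k:ℝ)+3) :=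
      mul_le_mul_of_nonneg_right m2 (by positivity)
    have m4 : ((k:ℝ) + (1+b+2*c).re)*((k:ℝ) + (1+2*b+c).re) ≤ D1*D2 :=
      mul_le_mul hg1 hg2 hE0 (norm_nonneg _)
    have m5 : ((k:ℝ) + (1+b+2*c).re)*((k:ℝ) + (1+2*b+c).re)*((k:ℝ)+1)^2 ≤ D1*D2*((k:ℝ)+1)^2 :=
      mul_le_mul_of_nonneg_right m4 (by positivity)
    have hcore : N1*N2*N3*((k:ℝ)+3) ≤ D1*D2*((k:ℝ)+1)^2 := le_trans m3 (le_trans hpoly m5)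
    have hEqC := ratio_eq b c hd' he' k
    have hnk : ‖(k:ℂ)+1‖ = (k:ℝ)+1 := by
      rw [show ((k:ℂ)+1) = ((k+1:ℕ):ℂ) by push_cast; ring, Complex.norm_natCast]
      push_cast; ring
    have hEq : ‖tt b c (k+1)‖ * (D1 * D2 * ((k:ℝ)+1)) = ‖tt b c k‖ * (N1*N2*N3) := by
      have h := congrArg (fun z : ℂ => ‖z‖) hEqC
      simp only [norm_mul] at h
      rw [hnk] at h
      exact h
    have hD1pos : (0:ℝ) < D1 := norm_pos_iff.2 (hd' k)
    have hD2pos : (0:ℝ) < D2 := norm_pos_iff.2 (he' k)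
    have hPpos : (0:ℝ) < D1*D2*((k:ℝ)+1) := by positivity
    have goal' : ‖tt b c (k+1)‖ * (((k:ℝ)+2)*((k:ℝ)+3)) ≤ ‖tt b c k‖ * (((k:ℝ)+1)*((k:ℝ)+2)) := by
      rw [← mul_le_mul_iff_of_pos_right hPpos]
      have hEq2 : ‖tt b c (k+1)‖ * (((k:ℝ)+2)*((k:ℝ)+3)) * (D1*D2*((k:ℝ)+1))
          = ‖tt b c k‖*((k:ℝ)+2) * (N1*N2*N3*((k:ℝ)+3)) := by
        linear_combination (((k:ℝ)+2)*((k:ℝ)+3)) * hEq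
      rw [hEq2]
      calc ‖tt b c k‖*((k:ℝ)+2) * (N1*N2*N3*((k:ℝ)+3))
          ≤ ‖tt b c k‖*((k:ℝ)+2) * (D1*D2*((k:ℝ)+1)^2) := by
            apply mul_le_mul_of_nonneg_left hcore; positivity
        _ = ‖tt b c k‖ * (((k:ℝ)+1)*((k:ℝ)+2)) * (D1*D2*((k:ℝ)+1)) := by ring
    unfold rr
    push_cast
    ring_nf
    ring_nf at goal'
    linarith [goal']
  have hmono : ∀ n, K ≤ n → rr b c n ≤ rr b c K := by
    intro n hn
    induction n, hn using Nat.le_induction with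
    | base => exact le_rfl
    | succ n hn ih => exact (hstep n hn).trans ih
  have hbound : ∀ n : ℕ, ‖tt b c (n+K)‖ ≤ rr b c K * (1/((n:ℝ)+1)^2) := by
    intro n
    have h1 := hmono (n+K) (Nat.le_add_left K n)
    unfold rr at h1
    have hle : ((n:ℝ)+1)^2 ≤ ((((n+K):ℕ):ℝ)+1)*((((n+K):ℕ):ℝ)+2) := by
      push_cast
      nlinarith [Nat.cast_nonneg (α := ℝ) K, Nat.cast_nonneg (α := ℝ) n]
    have h2 : ‖tt b c (n+K)‖*(((n:ℝ)+1)^2) ≤ rr b c K :=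
      le_trans (mul_le_mul_of_nonneg_left hle (norm_nonneg _)) h1
    rw [mul_one_div, le_div_iff₀ (by positivity : (0:ℝ) < ((n:ℝ)+1)^2)]
    exact h2
  have hsum2 : Summable (fun n : ℕ => rr b c K * (1/((n:ℝ)+1)^2)) := by
    apply Summable.mul_left
    have h := Real.summable_one_div_nat_pow.2 (by norm_num : 1 < 2)
    have := (summable_nat_add_iff 1).2 h
    simpa using this
  have hsh : Summable (fun n : ℕ => tt b c (n+K)) :=
    Summable.of_norm (hsum2.of_nonneg_of_le (fun n => norm_nonneg _) hbound)
  exact (summable_nat_add_iff K).1 hsh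

private lemma frac_tendsto_one : Tendsto (fun n : ℕ => (n:ℂ)/((n:ℂ)+1)) atTop (𝓝 1) := by
  have h0 : Tendsto (fun n : ℕ => ((n:ℂ)+1)⁻¹) atTop (𝓝 0) := by
    rw [tendsto_zero_iff_norm_tendsto_zero]
    have : (fun n : ℕ => ‖((n:ℂ)+1)⁻¹‖) = fun n : ℕ => 1/((n:ℝ)+1) := by
      funext n
      rw [norm_inv, show ((n:ℂ)+1) = ((n+1:ℕ):ℂ) by push_cast; ring, Complex.norm_natCast]
      push_cast; rw [one_div]
    rw [this]
    exact tendsto_one_div_add_atTop_nhds_zero_nat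
  have h1 : Tendsto (fun n : ℕ => 1 - ((n:ℂ)+1)⁻¹) atTop (𝓝 (1 - 0)) :=
    tendsto_const_nhds.sub h0
  rw [sub_zero] at h1
  apply h1.congr'
  filter_upwards [eventually_gt_atTop 0] with n hn
  have hne : ((n:ℂ)+1) ≠ 0 := by
    have : ((n+1:ℕ):ℂ) ≠ 0 := Nat.cast_ne_zero.2 n.succ_ne_zero
    simpa [Nat.cast_add] using this
  field_simp
  ring

set_option maxHeartbeats 1600000 in
private lemma SS_tendsto (b c : ℂ)
    (hd' : ∀ m : ℕ, (1+b+2*c) + (m:ℂ) ≠ 0) (he' : ∀ m : ℕ, (1+2*b+c) + (m:ℂ) ≠ 0) :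
    Tendsto (SS b c) atTop (𝓝 (Complex.Gamma (1 + b + 2 * c) * Complex.Gamma (1 + 2 * b + c) /
          (Complex.Gamma (1 + 2 * b + 2 * c) * Complex.Gamma (1 + b) * Complex.Gamma (1 + c)))) := by
  by_cases hdeg : ∃ m : ℕ, (1+2*b+2*c) + (m:ℂ) = 0 ∨ (1+b) + (m:ℂ) = 0 ∨ (1+c) + (m:ℂ) = 0
  · obtain ⟨m, hm⟩ := hdeg
    have hnum : ∀ n, m+1 ≤ n → poch (1+2*b+2*c) n * poch (1+b) n * poch (1+c) n = 0 := by
      intro n hn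
      have hmem : m ∈ Finset.range n := Finset.mem_range.2 (by omega)
      rcases hm with h | h | h
      · rw [poch_eq_prod (1+2*b+2*c) n]
        rw [Finset.prod_eq_zero hmem h]; ring
      · rw [poch_eq_prod (1+b) n]
        rw [Finset.prod_eq_zero hmem h]; ring
      · rw [poch_eq_prod (1+c) n]
        rw [Finset.prod_eq_zero hmem h]; ring
    have hS : ∀ n, m+1 ≤ n → SS b c n = 0 := by
      intro n hn; unfold SS; rw [hnum n hn, zero_div]
    have hG : Complex.Gamma (1 + 2*b + 2*c) * Complex.Gamma (1 + b) * Complex.Gamma (1 + c) = 0 := by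
      rcases hm with h | h | h
      · have : Complex.Gamma (1+2*b+2*c) = 0 := by
          rw [Complex.Gamma_eq_zero_iff]
          exact ⟨m, by linear_combination h⟩
        rw [show (1+2*b+2*c : ℂ) = 1+2*b+2*c by ring] at this
        rw [this]; ring
      · have : Complex.Gamma (1+b) = 0 := by
          rw [Complex.Gamma_eq_zero_iff]; exact ⟨m, by linear_combination h⟩
        rw [this]; ring
      · have : Complex.Gamma (1+c) = 0 := by
          rw [Complex.Gamma_eq_zero_iff]; exact ⟨m, by linear_combination h⟩
        rw [this]; ring
    rw [hG, div_zero]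
    apply tendsto_const_nhds.congr'
    filter_upwards [eventually_ge_atTop (m+1)] with n hn
    exact (hS n hn).symm
  · push_neg at hdeg
    have ha' : ∀ j : ℕ, (1+2*b+2*c) + (j:ℂ) ≠ 0 := fun j => (hdeg j).1
    have hb' : ∀ j : ℕ, (1+b) + (j:ℂ) ≠ 0 := fun j => (hdeg j).2.1
    have hc' : ∀ j : ℕ, (1+c) + (j:ℂ) ≠ 0 := fun j => (hdeg j).2.2
    have h1' : ∀ j : ℕ, (1:ℂ) + (j:ℂ) ≠ 0 := by
      intro j
      have : ((j+1:ℕ):ℂ) ≠ 0 := Nat.cast_ne_zero.2 j.succ_ne_zero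
      simpa [Nat.cast_add, add_comm] using this
    have hGa : Complex.Gamma (1+2*b+2*c) ≠ 0 :=
      Complex.Gamma_ne_zero fun m h => ha' m (by rw [h]; ring)
    have hGb : Complex.Gamma (1+b) ≠ 0 :=
      Complex.Gamma_ne_zero fun m h => hb' m (by rw [h]; ring)
    have hGc : Complex.Gamma (1+c) ≠ 0 :=
      Complex.Gamma_ne_zero fun m h => hc' m (by rw [h]; ring)
    -- key identity
    have hid : ∀ n : ℕ, 1 ≤ n →
        Complex.GammaSeq (1+b+2*c) n * Complex.GammaSeq (1+2*b+c) n /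
          (Complex.GammaSeq (1+2*b+2*c) n * Complex.GammaSeq (1+b) n * Complex.GammaSeq (1+c) n *
            Complex.GammaSeq 1 n) * (((n:ℂ))/((n:ℂ)+1))^2 = SS b c (n+1) := by
      intro n hn
      have hn0 : ((n:ℂ)) ≠ 0 := Nat.cast_ne_zero.2 (by omega)
      have hn1 : ((n:ℂ)+1) ≠ 0 := by
        have : ((n+1:ℕ):ℂ) ≠ 0 := Nat.cast_ne_zero.2 n.succ_ne_zero
        simpa [Nat.cast_add] using this
      have hfac : ((n.factorial : ℂ)) ≠ 0 := Nat.cast_ne_zero.2 n.factorial_ne_zero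
      have hcb : (n:ℂ)^(b:ℂ) ≠ 0 := by simp [Complex.cpow_eq_zero_iff, hn0]
      have hcc : (n:ℂ)^(c:ℂ) ≠ 0 := by simp [Complex.cpow_eq_zero_iff, hn0]
      have e1 : (n:ℂ)^(1+b+2*c) = (n:ℂ)*((n:ℂ)^(b:ℂ)*((n:ℂ)^(c:ℂ)*(n:ℂ)^(c:ℂ))) := by
        rw [show (1+b+2*c:ℂ) = 1+(b+(c+c)) by ring, Complex.cpow_add _ _ hn0,
          Complex.cpow_add _ _ hn0, Complex.cpow_add _ _ hn0, Complex.cpow_one]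
      have e2 : (n:ℂ)^(1+2*b+c) = (n:ℂ)*((n:ℂ)^(b:ℂ)*((n:ℂ)^(b:ℂ)*(n:ℂ)^(c:ℂ))) := by
        rw [show (1+2*b+c:ℂ) = 1+(b+(b+c)) by ring, Complex.cpow_add _ _ hn0,
          Complex.cpow_add _ _ hn0, Complex.cpow_add _ _ hn0, Complex.cpow_one]
      have e3 : (n:ℂ)^(1+2*b+2*c) = (n:ℂ)*((n:ℂ)^(b:ℂ)*((n:ℂ)^(b:ℂ)*((n:ℂ)^(c:ℂ)*(n:ℂ)^(c:ℂ)))) := by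
        rw [show (1+2*b+2*c:ℂ) = 1+(b+(b+(c+c))) by ring, Complex.cpow_add _ _ hn0,
          Complex.cpow_add _ _ hn0, Complex.cpow_add _ _ hn0, Complex.cpow_add _ _ hn0,
          Complex.cpow_one]
      have e4 : (n:ℂ)^(1+b) = (n:ℂ)*(n:ℂ)^(b:ℂ) := by
        rw [show (1+b:ℂ) = 1+b by ring, Complex.cpow_add _ _ hn0, Complex.cpow_one]
      have e5 : (n:ℂ)^(1+c) = (n:ℂ)*(n:ℂ)^(c:ℂ) := by
        rw [Complex.cpow_add _ _ hn0, Complex.cpow_one]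
      have e6 : (n:ℂ)^(1:ℂ) = (n:ℂ) := Complex.cpow_one _
      have hPd : poch (1+b+2*c) (n+1) ≠ 0 := poch_ne_zero' hd' (n+1)
      have hPe : poch (1+2*b+c) (n+1) ≠ 0 := poch_ne_zero' he' (n+1)
      have hPa : poch (1+2*b+2*c) (n+1) ≠ 0 := poch_ne_zero' ha' (n+1)
      have hPb : poch (1+b) (n+1) ≠ 0 := poch_ne_zero' hb' (n+1)
      have hPc : poch (1+c) (n+1) ≠ 0 := poch_ne_zero' hc' (n+1)
      have hP1 : poch 1 (n+1) ≠ 0 := poch_ne_zero' h1' (n+1)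
      unfold SS
      simp only [Complex.GammaSeq, ← poch_eq_prod]
      rw [e1, e2, e3, e4, e5, e6, poch_one (n+1)]
      push_cast [Nat.factorial_succ]
      obtain ⟨m, hm0, hmeq⟩ : ∃ m : ℂ, m ≠ 0 ∧ (n:ℂ)+1 = m := ⟨_, hn1, rfl⟩
      rw [hmeq]
      have hPd2 : poch (1+b+c*2) (1+n) ≠ 0 := by
        have := hPd; rwa [show (1+b+2*c:ℂ) = 1+b+c*2 by ring, Nat.add_comm n 1] at this
      have hPe2 : poch (1+b*2+c) (1+n) ≠ 0 := by
        have := hPe; rwa [show (1+2*b+c:ℂ) = 1+b*2+c by ring, Nat.add_comm n 1] at this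
      field_simp [hn0, hcb, hcc, hfac, hPd, hPe, hPa, hPb, hPc, hP1, hm0]
    have htend : Tendsto (fun n : ℕ =>
        Complex.GammaSeq (1+b+2*c) n * Complex.GammaSeq (1+2*b+c) n /
          (Complex.GammaSeq (1+2*b+2*c) n * Complex.GammaSeq (1+b) n * Complex.GammaSeq (1+c) n *
            Complex.GammaSeq 1 n) * (((n:ℂ))/((n:ℂ)+1))^2) atTop
        (𝓝 (Complex.Gamma (1+b+2*c) * Complex.Gamma (1+2*b+c) /
          (Complex.Gamma (1+2*b+2*c) * Complex.Gamma (1+b) * Complex.Gamma (1+c) *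
            Complex.Gamma 1) * (1:ℂ)^2)) := by
      apply Tendsto.mul
      · apply Tendsto.div
        · exact (Complex.GammaSeq_tendsto_Gamma _).mul (Complex.GammaSeq_tendsto_Gamma _)
        · exact (((Complex.GammaSeq_tendsto_Gamma _).mul
            (Complex.GammaSeq_tendsto_Gamma _)).mul
            (Complex.GammaSeq_tendsto_Gamma _)).mul (Complex.GammaSeq_tendsto_Gamma _)
        · rw [Complex.Gamma_one, mul_one]
          exact mul_ne_zero (mul_ne_zero hGa hGb) hGc
      · exact frac_tendsto_one.pow 2
    rw [Complex.Gamma_one, mul_one, one_pow, mul_one] at htend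
    have h2 : Tendsto (fun n : ℕ => SS b c (n+1)) atTop
        (𝓝 (Complex.Gamma (1+b+2*c) * Complex.Gamma (1+2*b+c) /
          (Complex.Gamma (1+2*b+2*c) * Complex.Gamma (1+b) * Complex.Gamma (1+c)))) := by
      apply htend.congr'
      filter_upwards [eventually_ge_atTop 1] with n hn
      exact hid n hn
    exact (tendsto_add_atTop_iff_nat 1).1 h2

/-- The two-parameter overlap formula (eq:overlap1). -/
theorem dixon_slater_overlap
    (b c : ℂ)
    (hd : ∀ m : ℕ, 1 + b + 2 * c ≠ -(m : ℂ))
    (he : ∀ m : ℕ, 1 + 2 * b + c ≠ -(m : ℂ)) :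
    F32 (2 * b + 2 * c) b c (1 + b + 2 * c) (1 + 2 * b + c)
      = Complex.Gamma (1 + b + 2 * c) * Complex.Gamma (1 + 2 * b + c) /
          (Complex.Gamma (1 + 2 * b + 2 * c) * Complex.Gamma (1 + b) * Complex.Gamma (1 + c)) := by
  have hd' : ∀ m : ℕ, (1+b+2*c) + (m:ℂ) ≠ 0 := fun m h => hd m (by linear_combination h)
  have he' : ∀ m : ℕ, (1+2*b+c) + (m:ℂ) ≠ 0 := fun m h => he m (by linear_combination h)
  have hsum : Summable (tt b c) := tt_summable b c hd' he'
  have hps := partial_sum_eq b c hd' he'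
  have hten : Tendsto (fun n : ℕ => ∑ k ∈ Finset.range n, tt b c k) atTop
      (𝓝 (Complex.Gamma (1 + b + 2 * c) * Complex.Gamma (1 + 2 * b + c) /
          (Complex.Gamma (1 + 2 * b + 2 * c) * Complex.Gamma (1 + b) * Complex.Gamma (1 + c)))) := by
    apply (tendsto_add_atTop_iff_nat 1).1
    simp only [hps]
    exact SS_tendsto b c hd' he'
  have hhs := hsum.hasSum_iff_tendsto_nat.2 hten
  rw [F32]
  exact hhs.tsum_eq
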